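/- In the ring of symmetric functions (equivalently, in MvPolynomial over at least n variables, or in the inverse limit), Σ_{σ ∈ S_n} p_{λ(σ)} = n! · h_n, where p_{λ(σ)} = ∏_i p_{λ_i} is the product of power sums over the cycle lengths λ(σ) = (λ_1, λ_2, …) of σ (including fixed points as cycles of length 1), and h_n is the complete homogeneous symmetric function of degree n. -/

import Mathlib

open MvPolynomial Finset Equiv Equiv.Perm

section Aux

variable {τ : Type*} [Fintype τ] [DecidableEq τ]

/-- Two tuples with the same multiset of values differ by a permutation. -/
lemma aux_exists_comp_perm : ∀ {n : ℕ} (f g : Fin n → τ),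
    (List.ofFn f).Perm (List.ofFn g) → ∃ σ : Equiv.Perm (Fin n), f = g ∘ σ := by
  intro n
  induction n with
  | zero => exact fun f g _ => ⟨1, funext fun i => i.elim0⟩
  | succ n ih =>
    intro f g h
    have hf0 : f 0 ∈ List.ofFn g := h.mem_iff.mp (by rw [List.mem_ofFn]; exact ⟨0, rfl⟩)
    rw [List.mem_ofFn] at hf0
    obtain ⟨j, hj⟩ := hf0
    have hg' : (List.ofFn (g ∘ Equiv.swap 0 j)).Perm (List.ofFn g) :=
      Equiv.Perm.ofFn_comp_perm (Equiv.swap 0 j) g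
    have h2 : (List.ofFn f).Perm (List.ofFn (g ∘ Equiv.swap 0 j)) := h.trans hg'.symm
    rw [List.ofFn_succ, List.ofFn_succ] at h2
    have hhead : (g ∘ Equiv.swap 0 j) 0 = f 0 := by
      simp only [Function.comp_apply, Equiv.swap_apply_left]; exact hj
    rw [hhead] at h2
    have h3 := h2.cons_inv
    obtain ⟨σ', hσ'⟩ := ih (fun i => f i.succ) (fun i => (g ∘ Equiv.swap 0 j) i.succ) h3
    refine ⟨Equiv.swap 0 j * Equiv.Perm.decomposeFin.symm (0, σ'), funext fun i => ?_⟩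
    induction i using Fin.cases with
    | zero =>
      simp only [Function.comp_apply, Equiv.Perm.mul_apply,
        Equiv.Perm.decomposeFin_symm_apply_zero, Equiv.swap_apply_left]
      exact hj.symm
    | succ i =>
      have := congrFun hσ' i
      simp only [Function.comp_apply] at this ⊢
      rw [this]
      simp only [Equiv.Perm.mul_apply, Equiv.Perm.decomposeFin_symm_apply_succ]
      simp

variable {α : Type*} [Fintype α] [DecidableEq α]

/-- An invariant function is constant on the cycles of a permutation. -/
lemma aux_const_on_cycles {σ : Equiv.Perm α} {f : α → τ} (hf : f ∘ σ = f) {a b : α}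
    (hab : σ.SameCycle a b) : f a = f b := by
  obtain ⟨i, hi⟩ := hab
  have key : ∀ (π : Equiv.Perm α), f ∘ π = f → ∀ k : ℕ, f ∘ (π ^ k : Equiv.Perm α) = f := by
    intro π hπ k
    induction k with
    | zero => simp
    | succ k ihk =>
      funext x
      have h1 := congrFun hπ x
      have h2 := congrFun ihk (π x)
      simp only [Function.comp_apply] at h1 h2 ⊢
      rw [pow_succ', Equiv.Perm.mul_apply]
      exact (congrFun hπ ((π ^ k) x)).trans (congrFun ihk x)
  have hinv : f ∘ ⇑σ⁻¹ = f := by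
    funext x
    have := congrFun hf (σ⁻¹ x)
    simpa using this.symm
  have key' : f ∘ (σ ^ i : Equiv.Perm α) = f := by
    rcases Int.eq_nat_or_neg i with ⟨k, rfl | rfl⟩
    · rw [zpow_natCast]; exact key σ hf k
    · rw [zpow_neg, zpow_natCast, ← inv_pow]; exact key σ⁻¹ hinv k
  have := congrFun key' a
  simp only [Function.comp_apply] at this
  rw [← hi, this]

/-- The setoid given by the cycles of a permutation. -/
def cycleSetoid (σ : Equiv.Perm α) : Setoid α :=
  ⟨σ.SameCycle, ⟨Equiv.Perm.SameCycle.refl σ, Equiv.Perm.SameCycle.symm,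
    Equiv.Perm.SameCycle.trans⟩⟩

instance (σ : Equiv.Perm α) : DecidableRel (cycleSetoid σ).r := fun a b =>
  (inferInstance : Decidable (σ.SameCycle a b))

/-- Step A: `p_{λ(σ)} · p₁^(#fixed points) = Σ_{f ∘ σ = f} Π_a X (f a)`. -/
lemma aux_cycle_sum (σ : Equiv.Perm α) :
    (σ.cycleType.map fun k => MvPolynomial.psum τ ℚ k).prod *
        MvPolynomial.psum τ ℚ 1 ^ (Fintype.card α - σ.cycleType.sum) =
      ∑ f : α → τ, if f ∘ σ = f then ∏ a, (MvPolynomial.X (f a) : MvPolynomial τ ℚ) else 0 := by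
  classical
  letI s : Setoid α := cycleSetoid σ
  haveI : DecidableRel s.r := fun a b => (inferInstance : Decidable (σ.SameCycle a b))
  set size : Quotient s → ℕ := fun q => (univ.filter fun a => (⟦a⟧ : Quotient s) = q).card
    with hsize
  have hr : ∀ a b : α, s.r a b ↔ σ.SameCycle a b := fun _ _ => Iff.rfl
  -- singleton classes of fixed points
  have class_of_fixed : ∀ a : α, σ a = a → ∀ b : α, s.r a b → b = a := by
    intro a ha b hab
    obtain ⟨i, hi⟩ := hab
    rw [← hi]
    exact Function.IsFixedPt.perm_zpow ha i
  have out_mk : ∀ a : α, s.r (Quotient.mk s a).out a := fun a => Quotient.mk_out a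
  -- RHS = sum over functions on the quotient
  have step1 : (∑ f : α → τ, if f ∘ σ = f then ∏ a, (MvPolynomial.X (f a) : MvPolynomial τ ℚ)
        else 0) =
      ∑ g : Quotient s → τ, ∏ a : α, (MvPolynomial.X (g ⟦a⟧) : MvPolynomial τ ℚ) := by
    rw [← Finset.sum_filter]
    refine Finset.sum_nbij' (fun f => fun q => f q.out) (fun g => g ∘ Quotient.mk s) ?_ ?_ ?_ ?_ ?_
    · intro f _; exact mem_univ _
    · intro g _
      simp only [mem_filter, mem_univ, true_and]
      funext a
      exact congrArg g (Quotient.sound (⟨-1, by simp⟩ : σ.SameCycle (σ a) a))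
    · intro f hf
      simp only [mem_filter, mem_univ, true_and] at hf
      funext a
      exact aux_const_on_cycles hf (out_mk a)
    · intro g _
      funext q
      exact congrArg g (Quotient.out_eq q)
    · intro f hf
      simp only [mem_filter, mem_univ, true_and] at hf
      refine Finset.prod_congr rfl fun a _ => ?_
      exact congrArg _ (aux_const_on_cycles hf (out_mk a)).symm
  -- factor the sum over the quotient
  have step2 : (∑ g : Quotient s → τ, ∏ a : α, (MvPolynomial.X (g ⟦a⟧) : MvPolynomial τ ℚ)) =
      ∏ q : Quotient s, MvPolynomial.psum τ ℚ (size q) := by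
    have hfib : ∀ g : Quotient s → τ, (∏ a : α, (MvPolynomial.X (g ⟦a⟧) : MvPolynomial τ ℚ)) =
        ∏ q : Quotient s, (MvPolynomial.X (g q) : MvPolynomial τ ℚ) ^ size q := by
      intro g
      rw [← Finset.prod_fiberwise' univ (fun a => (⟦a⟧ : Quotient s))
        (fun q => (MvPolynomial.X (g q) : MvPolynomial τ ℚ))]
      exact Finset.prod_congr rfl fun q _ => by rw [Finset.prod_const]
    simp_rw [hfib]
    simp only [MvPolynomial.psum]
    rw [Finset.prod_univ_sum (fun _ : Quotient s => (univ : Finset τ))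
      (fun q j => (MvPolynomial.X j : MvPolynomial τ ℚ) ^ size q), Fintype.piFinset_univ]
  -- the multiset of class sizes is the cycle type plus singletons for fixed points
  have step3 : (∏ q : Quotient s, MvPolynomial.psum τ ℚ (size q)) =
      (σ.cycleType.map fun k => MvPolynomial.psum τ ℚ k).prod *
        MvPolynomial.psum τ ℚ 1 ^ (Fintype.card α - σ.cycleType.sum) := by
    rw [← Finset.prod_filter_mul_prod_filter_not univ (fun q : Quotient s => q.out ∈ σ.support)]
    congr 1
    -- classes meeting the support ↔ cycle factors
    · rw [Equiv.Perm.cycleType_def, Multiset.map_map, ← Finset.prod_eq_multiset_prod]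
      refine Finset.prod_bij (fun q _ => σ.cycleOf q.out) ?_ ?_ ?_ ?_
      · intro q hq
        simp only [mem_filter, mem_univ, true_and] at hq
        exact Equiv.Perm.cycleOf_mem_cycleFactorsFinset_iff.mpr hq
      · intro q hq q' hq' hqq'
        simp only [mem_filter, mem_univ, true_and] at hq hq'
        have hqq'' : σ.cycleOf q.out = σ.cycleOf q'.out := hqq'
        have h1 : q.out ∈ (σ.cycleOf q'.out).support := by
          rw [← hqq'']
          exact Equiv.Perm.mem_support_cycleOf_iff.mpr ⟨Equiv.Perm.SameCycle.refl σ _, hq⟩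
        have h2 : σ.SameCycle q'.out q.out :=
          (Equiv.Perm.mem_support_cycleOf_iff.mp h1).1
        rw [← Quotient.out_eq q, ← Quotient.out_eq q']
        exact (Quotient.sound h2.symm : (⟦q.out⟧ : Quotient s) = ⟦q'.out⟧)
      · intro c hc
        have hc' := Equiv.Perm.mem_cycleFactorsFinset_iff.mp hc
        obtain ⟨a, ha⟩ := hc'.1.nonempty_support
        have haσ : a ∈ σ.support := Equiv.Perm.mem_cycleFactorsFinset_support_le hc ha
        have hca : c = σ.cycleOf a := Equiv.Perm.cycle_is_cycleOf ha hc
        refine ⟨(⟦a⟧ : Quotient s), ?_, ?_⟩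
        · simp only [mem_filter, mem_univ, true_and]
          exact ((out_mk a).mem_support_iff).mpr haσ
        · show σ.cycleOf (⟦a⟧ : Quotient s).out = c
          rw [hca]
          exact (out_mk a : σ.SameCycle _ a).cycleOf_eq
      · intro q hq
        simp only [mem_filter, mem_univ, true_and] at hq
        simp only [Function.comp_apply]
        congr 1
        show (univ.filter fun a => (⟦a⟧ : Quotient s) = q).card = _
        congr 1
        ext a
        simp only [mem_filter, mem_univ, true_and, Equiv.Perm.mem_support_cycleOf_iff]
        constructor
        · intro h
          refine ⟨?_, hq⟩
          have : s.r a q.out := Quotient.exact (h.trans (Quotient.out_eq q).symm)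
          exact (this : σ.SameCycle a q.out).symm
        · intro h
          have : (⟦a⟧ : Quotient s) = ⟦q.out⟧ := Quotient.sound (h.1.symm : s.r a q.out)
          rw [this, Quotient.out_eq]
    -- singleton classes of fixed points
    · have hone : ∀ q ∈ univ.filter (fun q : Quotient s => ¬q.out ∈ σ.support), size q = 1 := by
        intro q hq
        simp only [mem_filter, mem_univ, true_and, Equiv.Perm.mem_support, not_not] at hq
        have : (univ.filter fun a => (⟦a⟧ : Quotient s) = q) = {q.out} := by
          ext a
          simp only [mem_filter, mem_univ, true_and, mem_singleton]
          constructor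
          · intro h
            exact class_of_fixed q.out hq a
              (Quotient.exact ((Quotient.out_eq q).trans h.symm))
          · rintro rfl
            exact Quotient.out_eq q
        show (univ.filter fun a => (⟦a⟧ : Quotient s) = q).card = 1
        rw [this, Finset.card_singleton]
      rw [Finset.prod_congr rfl fun q hq => by rw [hone q hq], Finset.prod_const]
      congr 1
      rw [Equiv.Perm.sum_cycleType, ← Finset.card_compl]
      refine (Finset.card_bij (fun a _ => (⟦a⟧ : Quotient s)) ?_ ?_ ?_).symm
      · intro a ha
        simp only [Finset.mem_compl, Equiv.Perm.mem_support, not_not] at ha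
        simp only [mem_filter, mem_univ, true_and, Equiv.Perm.mem_support, not_not]
        rw [class_of_fixed a ha _ (out_mk a).symm]
        exact ha
      · intro a ha b hb hab
        simp only [Finset.mem_compl, Equiv.Perm.mem_support, not_not] at ha hb
        exact (class_of_fixed a ha b (Quotient.exact hab)).symm
      · intro q hq
        simp only [mem_filter, mem_univ, true_and, Equiv.Perm.mem_support, not_not] at hq
        refine ⟨q.out, ?_, Quotient.out_eq q⟩
        simp only [Finset.mem_compl, Equiv.Perm.mem_support, not_not]
        exact hq
  rw [step1, step2, step3]

end Aux

/-- The Frobenius characteristic of the trivial representation: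
`Σ_{σ ∈ Sₙ} p_{λ(σ)} = n!·hₙ`, where `λ(σ)` is the full cycle type of `σ` (all cycles,
including fixed points, of which there are `n − σ.cycleType.sum`), `p_k` is the `k`-th
power sum and `hₙ` the complete homogeneous symmetric polynomial. -/
theorem sum_powerSum_cycleType (n : ℕ) (τ : Type*) [Fintype τ] [DecidableEq τ] :
    ∑ σ : Equiv.Perm (Fin n),
        (σ.cycleType.map fun k => MvPolynomial.psum τ ℚ k).prod *
          MvPolynomial.psum τ ℚ 1 ^ (n - σ.cycleType.sum) =
      (n.factorial : MvPolynomial τ ℚ) * MvPolynomial.hsymm τ ℚ n := by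
  classical
  have stepA : ∀ σ : Equiv.Perm (Fin n),
      (σ.cycleType.map fun k => MvPolynomial.psum τ ℚ k).prod *
          MvPolynomial.psum τ ℚ 1 ^ (n - σ.cycleType.sum) =
        ∑ f : Fin n → τ, if f ∘ σ = f then ∏ i, (MvPolynomial.X (f i) : MvPolynomial τ ℚ)
          else 0 := by
    intro σ
    have := aux_cycle_sum (α := Fin n) (τ := τ) σ
    rwa [Fintype.card_fin] at this
  set mval : (Fin n → τ) → Sym τ n := fun f => ⟨(List.ofFn f : Multiset τ), by simp⟩ with hmval
  have hlen : ∀ s : Sym τ n, s.1.toList.length = n := fun s => by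
    rw [Multiset.length_toList, s.2]
  set rep : Sym τ n → (Fin n → τ) :=
    fun s i => s.1.toList.get (Fin.cast (hlen s).symm i) with hrepdef
  have hofn : ∀ s : Sym τ n, List.ofFn (rep s) = s.1.toList := by
    intro s
    apply List.ext_get (by simp [hlen s])
    intro i h1 h2
    rw [List.get_ofFn]
    rfl
  have hrep : ∀ s : Sym τ n, (List.ofFn (rep s) : Multiset τ) = s.1 := by
    intro s; rw [hofn s, Multiset.coe_toList]
  have hmval_rep : ∀ s : Sym τ n, mval (rep s) = s := fun s => Subtype.ext (hrep s)
  have hmval_comp : ∀ (f : Fin n → τ) (σ : Equiv.Perm (Fin n)), mval (f ∘ σ) = mval f :=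
    fun f σ => Subtype.ext (Multiset.coe_eq_coe.mpr (Equiv.Perm.ofFn_comp_perm σ f))
  -- the key counting step (orbit–stabilizer)
  have count : ∀ (f : Fin n → τ) (s : Sym τ n),
      (univ.filter fun σ : Equiv.Perm (Fin n) => rep s ∘ σ = f).card =
        if mval f = s then (univ.filter fun σ : Equiv.Perm (Fin n) => f ∘ σ = f).card
        else 0 := by
    intro f s
    by_cases h : mval f = s
    · rw [if_pos h]
      have hperm : (List.ofFn f).Perm (List.ofFn (rep s)) := by
        rw [← Multiset.coe_eq_coe]
        show (mval f).1 = (mval (rep s)).1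
        rw [h, hmval_rep]
      obtain ⟨σ₀, hσ₀⟩ := aux_exists_comp_perm f (rep s) hperm
      refine Finset.card_bij (fun σ _ => σ₀⁻¹ * σ) ?_ ?_ ?_
      · intro σ hσ
        simp only [mem_filter, mem_univ, true_and] at hσ ⊢
        funext x
        have h1 := congrFun hσ₀ (σ₀⁻¹ (σ x))
        have h2 := congrFun hσ x
        simp only [Function.comp_apply, Equiv.Perm.coe_mul, Equiv.Perm.coe_inv, Equiv.apply_symm_apply] at h1 h2 ⊢
        rw [h1, h2]
      · intro σ hσ σ' hσ' hss
        have : σ₀⁻¹ * σ = σ₀⁻¹ * σ' := hss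
        exact mul_left_cancel this
      · intro π hπ
        simp only [mem_filter, mem_univ, true_and] at hπ
        refine ⟨σ₀ * π, ?_, by group⟩
        simp only [mem_filter, mem_univ, true_and]
        funext x
        have h1 := congrFun hσ₀ (π x)
        have h2 := congrFun hπ x
        simp only [Function.comp_apply, Equiv.Perm.coe_mul] at h1 h2 ⊢
        rw [← h1, h2]
    · rw [if_neg h]
      rw [Finset.card_eq_zero, Finset.filter_eq_empty_iff]
      intro σ _ hc
      exact h (by rw [← hc, hmval_comp, hmval_rep])
  have hprodrep : ∀ s : Sym τ n,
      (∏ i, (MvPolynomial.X (rep s i) : MvPolynomial τ ℚ)) = (s.1.map MvPolynomial.X).prod := by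
    intro s
    conv_rhs => rw [← hrep s, Multiset.map_coe, Multiset.prod_coe, List.map_ofFn,
      List.prod_ofFn]
    rfl
  calc ∑ σ : Equiv.Perm (Fin n),
        (σ.cycleType.map fun k => MvPolynomial.psum τ ℚ k).prod *
          MvPolynomial.psum τ ℚ 1 ^ (n - σ.cycleType.sum)
      = ∑ σ : Equiv.Perm (Fin n), ∑ f : Fin n → τ,
          if f ∘ σ = f then ∏ i, (MvPolynomial.X (f i) : MvPolynomial τ ℚ) else 0 :=
        Finset.sum_congr rfl fun σ _ => stepA σ
    _ = ∑ f : Fin n → τ, ∑ σ : Equiv.Perm (Fin n),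
          if f ∘ σ = f then ∏ i, (MvPolynomial.X (f i) : MvPolynomial τ ℚ) else 0 :=
        Finset.sum_comm
    _ = ∑ f : Fin n → τ, (univ.filter fun σ : Equiv.Perm (Fin n) => f ∘ σ = f).card •
          ∏ i, (MvPolynomial.X (f i) : MvPolynomial τ ℚ) := by
        refine Finset.sum_congr rfl fun f _ => ?_
        rw [← Finset.sum_filter, Finset.sum_const]
    _ = ∑ f : Fin n → τ, ∑ s : Sym τ n,
          (univ.filter fun σ : Equiv.Perm (Fin n) => rep s ∘ σ = f).card •
          ∏ i, (MvPolynomial.X (f i) : MvPolynomial τ ℚ) := by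
        refine Finset.sum_congr rfl fun f _ => ?_
        simp_rw [count f, ite_smul, zero_smul]
        rw [Finset.sum_ite_eq univ (mval f), if_pos (mem_univ _)]
    _ = ∑ s : Sym τ n, ∑ f : Fin n → τ,
          (univ.filter fun σ : Equiv.Perm (Fin n) => rep s ∘ σ = f).card •
          ∏ i, (MvPolynomial.X (f i) : MvPolynomial τ ℚ) := Finset.sum_comm
    _ = ∑ s : Sym τ n, ∑ f : Fin n → τ, ∑ σ : Equiv.Perm (Fin n),
          if rep s ∘ σ = f then ∏ i, (MvPolynomial.X (f i) : MvPolynomial τ ℚ) else 0 := by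
        refine Finset.sum_congr rfl fun s _ => Finset.sum_congr rfl fun f _ => ?_
        rw [← Finset.sum_filter, Finset.sum_const]
    _ = ∑ s : Sym τ n, ∑ σ : Equiv.Perm (Fin n), ∑ f : Fin n → τ,
          if rep s ∘ σ = f then ∏ i, (MvPolynomial.X (f i) : MvPolynomial τ ℚ) else 0 :=
        Finset.sum_congr rfl fun s _ => Finset.sum_comm
    _ = ∑ s : Sym τ n, ∑ σ : Equiv.Perm (Fin n),
          ∏ i, (MvPolynomial.X (rep s (σ i)) : MvPolynomial τ ℚ) := by
        refine Finset.sum_congr rfl fun s _ => Finset.sum_congr rfl fun σ _ => ?_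
        rw [Finset.sum_ite_eq univ (rep s ∘ σ)
          (fun f => ∏ i, (MvPolynomial.X (f i) : MvPolynomial τ ℚ)), if_pos (mem_univ _)]
        rfl
    _ = ∑ s : Sym τ n, ∑ _σ : Equiv.Perm (Fin n),
          ∏ i, (MvPolynomial.X (rep s i) : MvPolynomial τ ℚ) := by
        refine Finset.sum_congr rfl fun s _ => Finset.sum_congr rfl fun σ _ => ?_
        exact Equiv.prod_comp σ fun i => (MvPolynomial.X (rep s i) : MvPolynomial τ ℚ)
    _ = (n.factorial : MvPolynomial τ ℚ) * MvPolynomial.hsymm τ ℚ n := by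
        simp only [Finset.sum_const, Finset.card_univ, Fintype.card_perm, Fintype.card_fin,
          hprodrep]
        rw [MvPolynomial.hsymm, Finset.mul_sum]
        refine Finset.sum_congr rfl fun s _ => ?_
        rw [nsmul_eq_mul]
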